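/- In an intra-regular AG-groupoid S with left identity, every fuzzy generalized bi-ideal is a fuzzy bi-ideal: if μ satisfies μ((x*a)*y) ≥ min(μ(x), μ(y)) for all x, a, y, then also μ(a*b) ≥ min(μ(a), μ(b)) for all a, b. -/
import Mathlib


/-- In an intra-regular AG-groupoid with left identity, every fuzzy
    generalized bi-ideal is a fuzzy bi-ideal. -/
theorem fuzzy_gen_bi_is_bi {S : Type*} (mul : S → S → S)
    (hinv : ∀ a b c : S, mul (mul a b) c = mul (mul c b) a)
    (e : S) (he : ∀ x : S, mul e x = x)
    (hintra : ∀ a : S, ∃ x y : S, a = mul (mul x (mul a a)) y)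
    (μ : S → ℝ) (hμ0 : ∀ x, 0 ≤ μ x) (hμ1 : ∀ x, μ x ≤ 1)
    (hgb : ∀ x a y : S, min (μ x) (μ y) ≤ μ (mul (mul x a) y)) :
    ∀ a b : S, min (μ a) (μ b) ≤ μ (mul a b) := by
  intro a b
  obtain ⟨x, y, hx⟩ := hintra a
  have key : mul a b = mul (mul b (mul (mul x (mul a e)) y)) a := by
    calc mul a b
        = mul (mul (mul x (mul a a)) y) b := by rw [← hx]
      _ = mul (mul b y) (mul x (mul a a)) := hinv _ _ _
      _ = mul (mul e (mul b y)) (mul x (mul a a)) := by rw [he]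
      _ = mul (mul (mul x (mul a a)) (mul b y)) e := hinv _ _ _
      _ = mul (mul (mul (mul b y) (mul a a)) x) e := by
            rw [hinv x (mul a a) (mul b y)]
      _ = mul (mul (mul (mul e (mul b y)) (mul a a)) x) e := by rw [he]
      _ = mul (mul (mul (mul (mul a a) (mul b y)) e) x) e := by
            rw [hinv e (mul b y) (mul a a)]
      _ = mul (mul (mul (mul (mul (mul b y) a) a) e) x) e := by
            rw [hinv a a (mul b y)]
      _ = mul (mul (mul (mul (mul (mul e (mul b y)) a) a) e) x) e := by rw [he]
      _ = mul (mul (mul (mul (mul (mul a (mul b y)) e) a) e) x) e := by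
            rw [hinv e (mul b y) a]
      _ = mul (mul (mul (mul (mul a e) (mul a (mul b y))) e) x) e := by
            rw [hinv (mul a (mul b y)) e a]
      _ = mul (mul (mul (mul e (mul a (mul b y))) (mul a e)) x) e := by
            rw [hinv (mul a e) (mul a (mul b y)) e]
      _ = mul (mul (mul x (mul a e)) (mul e (mul a (mul b y)))) e := by
            rw [hinv (mul e (mul a (mul b y))) (mul a e) x]
      _ = mul (mul e (mul e (mul a (mul b y)))) (mul x (mul a e)) := hinv _ _ _
      _ = mul (mul a (mul b y)) (mul x (mul a e)) := by rw [he, he]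
      _ = mul (mul (mul x (mul a e)) (mul b y)) a := hinv _ _ _
      _ = mul (mul (mul e (mul x (mul a e))) (mul b y)) a := by rw [he]
      _ = mul (mul (mul (mul b y) (mul x (mul a e))) e) a := by
            rw [hinv e (mul x (mul a e)) (mul b y)]
      _ = mul (mul (mul (mul (mul x (mul a e)) y) b) e) a := by
            rw [hinv b y (mul x (mul a e))]
      _ = mul (mul (mul e b) (mul (mul x (mul a e)) y)) a := by
            rw [hinv (mul (mul x (mul a e)) y) b e]
      _ = mul (mul b (mul (mul x (mul a e)) y)) a := by rw [he]
  rw [key, min_comm]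
  exact hgb b _ a
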